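/- Let F : ℝ^n → ℝ^n be continuously differentiable on a neighborhood of p* with F(p*) = 0 and with the Fréchet derivative DF(p*) invertible. Then there exist η̄ > 0, ε > 0 and a constant c ∈ (0,1) such that: for every inexact Newton sequence (p_k) with forcing terms (η_k) satisfying η_k ≤ η̄ for all k, if ‖p_0 − p*‖ ≤ ε then ‖p_{k+1} − p*‖ ≤ c ‖p_k − p*‖ for all k ≥ 0; in particular p_k converges to p* q-linearly. -/

import Mathlib

open Filter Topology

set_option maxHeartbeats 1000000 in
/-- Local q-linear convergence of inexact Newton sequences with small forcing terms
(Dembo–Eisenstat–Steihaug, Thm. 2.3, in the unweighted norm). -/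
theorem inexact_newton_qlinear_convergence
    (n : ℕ) (F : EuclideanSpace ℝ (Fin n) → EuclideanSpace ℝ (Fin n))
    (pstar : EuclideanSpace ℝ (Fin n))
    (hF : ∃ U : Set (EuclideanSpace ℝ (Fin n)),
      IsOpen U ∧ pstar ∈ U ∧ ContDiffOn ℝ 1 F U)
    (hroot : F pstar = 0)
    (hinv : IsUnit (fderiv ℝ F pstar)) :
    ∃ ηbar > (0:ℝ), ∃ ε > (0:ℝ), ∃ c : ℝ, 0 < c ∧ c < 1 ∧
      ∀ (p : ℕ → EuclideanSpace ℝ (Fin n)) (η : ℕ → ℝ),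
        (∀ k, 0 ≤ η k) →
        (∀ k, η k ≤ ηbar) →
        (∀ k, ‖F (p k) + (fderiv ℝ F (p k)) (p (k+1) - p k)‖ ≤ η k * ‖F (p k)‖) →
        ‖p 0 - pstar‖ ≤ ε →
        (∀ k, ‖p (k+1) - pstar‖ ≤ c * ‖p k - pstar‖) ∧
        Tendsto p atTop (𝓝 pstar) := by
  classical
  obtain ⟨U, hUopen, hpU, hCD⟩ := hF
  set A := fderiv ℝ F pstar with hA
  obtain ⟨u, hu⟩ := hinv
  set B := ((u⁻¹ : (EuclideanSpace ℝ (Fin n) →L[ℝ] EuclideanSpace ℝ (Fin n))ˣ) :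
      EuclideanSpace ℝ (Fin n) →L[ℝ] EuclideanSpace ℝ (Fin n)) with hB
  have hBA : ∀ x : EuclideanSpace ℝ (Fin n), B (A x) = x := by
    intro x
    have h1 : B * (u : EuclideanSpace ℝ (Fin n) →L[ℝ] EuclideanSpace ℝ (Fin n)) = 1 :=
      u.inv_mul
    calc B (A x) = (B * (u : EuclideanSpace ℝ (Fin n) →L[ℝ] EuclideanSpace ℝ (Fin n))) x := by
          rw [ContinuousLinearMap.mul_apply, hu]
      _ = x := by rw [h1]; rfl
  set β : ℝ := ‖B‖ + 1 with hβdef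
  have hβ : 0 < β := by positivity
  have hBle : ∀ x : EuclideanSpace ℝ (Fin n), ‖B x‖ ≤ β * ‖x‖ := by
    intro x
    calc ‖B x‖ ≤ ‖B‖ * ‖x‖ := B.le_opNorm x
      _ ≤ β * ‖x‖ := by have := norm_nonneg x; nlinarith [norm_nonneg B]
  set μ : ℝ := min 1 (1 / (8 * β)) with hμdef
  have hμpos : 0 < μ := lt_min one_pos (by positivity)
  have hμ1 : μ ≤ 1 := min_le_left _ _
  have hβμ : β * μ ≤ 1 / 8 := by
    have h2 : μ ≤ 1 / (8 * β) := min_le_right _ _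
    have h3 : β * (1 / (8 * β)) = 1 / 8 := by field_simp
    nlinarith
  set ηbar : ℝ := μ / (‖A‖ + 1) with hηdef
  have hAn : (0:ℝ) < ‖A‖ + 1 := by positivity
  have hηpos : 0 < ηbar := by positivity
  -- continuity of the derivative at pstar
  have hcont : ContinuousAt (fun x => fderiv ℝ F x) pstar := by
    have h1 : ContinuousOn (fderivWithin ℝ F U) U :=
      hCD.continuousOn_fderivWithin hUopen.uniqueDiffOn le_rfl
    have h2 : ContinuousOn (fun x => fderiv ℝ F x) U :=
      h1.congr fun x hx => (fderivWithin_of_isOpen hUopen hx).symm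
    exact h2.continuousAt (hUopen.mem_nhds hpU)
  obtain ⟨δ1, hδ1pos, hδ1⟩ := Metric.continuousAt_iff.mp hcont μ hμpos
  obtain ⟨δ2, hδ2pos, hδ2⟩ := Metric.isOpen_iff.mp hUopen pstar hpU
  set δ : ℝ := min δ1 δ2 / 2 with hδdef
  have hδpos : 0 < δ := by positivity
  have hδlt1 : δ < δ1 := by
    have : min δ1 δ2 ≤ δ1 := min_le_left _ _
    rw [hδdef]; linarith
  have hδlt2 : δ < δ2 := by
    have : min δ1 δ2 ≤ δ2 := min_le_right _ _
    rw [hδdef]; linarith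
  have hδU : Metric.closedBall pstar δ ⊆ U := fun x hx => by
    apply hδ2
    rw [Metric.mem_closedBall] at hx
    rw [Metric.mem_ball]
    linarith
  have hder : ∀ x ∈ Metric.closedBall pstar δ, ‖fderiv ℝ F x - A‖ ≤ μ := by
    intro x hx
    rw [Metric.mem_closedBall] at hx
    have h := hδ1 (x := x) (by linarith)
    rw [dist_eq_norm] at h
    exact h.le
  have hdiff : ∀ x ∈ Metric.closedBall pstar δ, DifferentiableAt ℝ F x := by
    intro x hx
    exact ((hCD.differentiableOn one_ne_zero).differentiableAt (hUopen.mem_nhds (hδU hx)))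
  -- mean value estimate
  have hFapprox : ∀ p ∈ Metric.closedBall pstar δ,
      ‖F p - A (p - pstar)‖ ≤ μ * ‖p - pstar‖ := by
    intro p hp
    have key := Convex.norm_image_sub_le_of_norm_hasFDerivWithin_le
      (f := fun x => F x - A x) (f' := fun x => fderiv ℝ F x - A) (C := μ)
      (s := Metric.closedBall pstar δ)
      (fun x hx => ((hdiff x hx).hasFDerivAt.sub A.hasFDerivAt).hasFDerivWithinAt)
      (fun x hx => hder x hx) (convex_closedBall pstar δ)
      (Metric.mem_closedBall_self hδpos.le) hp
    have heq : F p - A p - (F pstar - A pstar) = F p - A (p - pstar) := by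
      rw [hroot, map_sub]; abel
    rwa [heq] at key
  -- single-step estimate
  have step : ∀ (q q' : EuclideanSpace ℝ (Fin n)) (ηk : ℝ), 0 ≤ ηk → ηk ≤ ηbar →
      ‖F q + (fderiv ℝ F q) (q' - q)‖ ≤ ηk * ‖F q‖ →
      ‖q - pstar‖ ≤ δ → ‖q' - pstar‖ ≤ (1/2) * ‖q - pstar‖ := by
    intro q q' ηk hη0 hηb hres hqδ
    set e := q - pstar with he
    set e' := q' - pstar with he'
    set d := q' - q with hd
    have hqmem : q ∈ Metric.closedBall pstar δ := by
      rw [Metric.mem_closedBall, dist_eq_norm]; exact hqδ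
    have h1 : ‖F q - A e‖ ≤ μ * ‖e‖ := hFapprox q hqmem
    have hFq : ‖F q‖ ≤ (‖A‖ + μ) * ‖e‖ := by
      calc ‖F q‖ = ‖(F q - A e) + A e‖ := by rw [sub_add_cancel]
        _ ≤ ‖F q - A e‖ + ‖A e‖ := norm_add_le _ _
        _ ≤ μ * ‖e‖ + ‖A‖ * ‖e‖ := add_le_add h1 (A.le_opNorm e)
        _ = (‖A‖ + μ) * ‖e‖ := by ring
    have hres2 : ‖F q + (fderiv ℝ F q) d‖ ≤ μ * ‖e‖ := by
      have hFqnn : (0:ℝ) ≤ ‖e‖ := norm_nonneg e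
      have h4 : ‖F q‖ ≤ (‖A‖ + 1) * ‖e‖ := by nlinarith
      have h3 : ηk * ‖F q‖ ≤ ηbar * ((‖A‖ + 1) * ‖e‖) := by
        have := norm_nonneg (F q)
        nlinarith
      have h5 : ηbar * ((‖A‖ + 1) * ‖e‖) = μ * ‖e‖ := by
        rw [← mul_assoc, hηdef, div_mul_cancel₀ μ hAn.ne']
      linarith [hres, h3.trans_eq h5]
    have hdnorm : ‖d‖ ≤ ‖e‖ + ‖e'‖ := by
      have hde : d = e' - e := by rw [he, he', hd]; abel
      rw [hde]
      calc ‖e' - e‖ ≤ ‖e'‖ + ‖e‖ := norm_sub_le _ _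
        _ = ‖e‖ + ‖e'‖ := by ring
    have hAd : ‖(A - fderiv ℝ F q) d‖ ≤ μ * (‖e‖ + ‖e'‖) := by
      calc ‖(A - fderiv ℝ F q) d‖ ≤ ‖A - fderiv ℝ F q‖ * ‖d‖ :=
            (A - fderiv ℝ F q).le_opNorm d
        _ ≤ μ * ‖d‖ := by
            rw [norm_sub_rev]
            exact mul_le_mul_of_nonneg_right (hder q hqmem) (norm_nonneg d)
        _ ≤ μ * (‖e‖ + ‖e'‖) := mul_le_mul_of_nonneg_left hdnorm hμpos.le
    have hid : A e' = (A e - F q) + (F q + (fderiv ℝ F q) d) + (A - fderiv ℝ F q) d := by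
      have he'eq : e' = e + d := by rw [he, he', hd]; abel
      rw [he'eq, map_add]
      simp only [ContinuousLinearMap.sub_apply]
      abel
    have hAe' : ‖A e'‖ ≤ 3 * μ * ‖e‖ + μ * ‖e'‖ := by
      rw [hid]
      calc ‖(A e - F q) + (F q + (fderiv ℝ F q) d) + (A - fderiv ℝ F q) d‖
          ≤ ‖(A e - F q) + (F q + (fderiv ℝ F q) d)‖ + ‖(A - fderiv ℝ F q) d‖ :=
            norm_add_le _ _
        _ ≤ ‖A e - F q‖ + ‖F q + (fderiv ℝ F q) d‖ + ‖(A - fderiv ℝ F q) d‖ := by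
            linarith [norm_add_le (A e - F q) (F q + (fderiv ℝ F q) d)]
        _ ≤ μ * ‖e‖ + μ * ‖e‖ + μ * (‖e‖ + ‖e'‖) := by
            have h6 : ‖A e - F q‖ = ‖F q - A e‖ := norm_sub_rev _ _
            rw [h6]
            linarith
        _ = 3 * μ * ‖e‖ + μ * ‖e'‖ := by ring
    have h6 : ‖e'‖ ≤ β * (3 * μ * ‖e‖ + μ * ‖e'‖) := by
      calc ‖e'‖ = ‖B (A e')‖ := by rw [hBA]
        _ ≤ β * ‖A e'‖ := hBle _
        _ ≤ β * (3 * μ * ‖e‖ + μ * ‖e'‖) := mul_le_mul_of_nonneg_left hAe' hβ.le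
    nlinarith [norm_nonneg e, norm_nonneg e',
      mul_le_mul_of_nonneg_right hβμ (norm_nonneg e),
      mul_le_mul_of_nonneg_right hβμ (norm_nonneg e')]
  refine ⟨ηbar, hηpos, δ, hδpos, 1/2, by norm_num, by norm_num, ?_⟩
  intro p η hη0 hηb hres hp0
  have hball : ∀ k, ‖p k - pstar‖ ≤ δ := by
    intro k
    induction k with
    | zero => exact hp0
    | succ k ih =>
      have := step (p k) (p (k+1)) (η k) (hη0 k) (hηb k) (hres k) ih
      nlinarith [norm_nonneg (p k - pstar)]
  have hstep : ∀ k, ‖p (k+1) - pstar‖ ≤ (1/2) * ‖p k - pstar‖ := by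
    intro k
    exact step (p k) (p (k+1)) (η k) (hη0 k) (hηb k) (hres k) (hball k)
  refine ⟨hstep, ?_⟩
  have hgeo : ∀ k, ‖p k - pstar‖ ≤ (1/2)^k * δ := by
    intro k
    induction k with
    | zero => simpa using hp0
    | succ k ih =>
      calc ‖p (k+1) - pstar‖ ≤ (1/2) * ‖p k - pstar‖ := hstep k
        _ ≤ (1/2) * ((1/2)^k * δ) := by linarith
        _ = (1/2)^(k+1) * δ := by ring
  rw [tendsto_iff_dist_tendsto_zero]
  have hpow : Tendsto (fun k : ℕ => (1/2:ℝ)^k) atTop (𝓝 0) :=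
    tendsto_pow_atTop_nhds_zero_of_lt_one (by norm_num) (by norm_num)
  exact squeeze_zero (g := fun k => (1/2:ℝ)^k * δ) (fun k => dist_nonneg)
    (fun k => by rw [dist_eq_norm]; exact hgeo k) (by simpa using hpow.mul_const δ)
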